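/- arXiv:2406.12413 — 5 statements merged into one kernel-verified Lean document; each statement's English description precedes it below -/
import Mathlib

section
/- There exists an instance with 3 agents, 6 goods, and additive valuations taking at most 3 distinct values, such that no partial allocation in which every agent's bundle has cardinality at most 2 is simultaneously 2/3-EFX and free of critical goods (where a good g in the pool is critical for agent i if v_i(g) > (1/2)·v_i(X_i)). -/
def w : Fin 3 → Fin 6 → ℕ :=
  ![![100,100,60,1,1,1], ![100,100,1,60,1,1], ![100,100,1,1,60,1]]

def S2 : Finset (Finset (Fin 6)) := Finset.univ.filter (fun s => s.card ≤ 2)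

def P (X : Fin 3 → Finset (Fin 6)) : Prop :=
  (∀ i j, i ≠ j → Disjoint (X i) (X j)) →
  ¬((∀ i j, ∀ g ∈ X j,
        3 * (∑ x ∈ X i, w i x) ≥ 2 * ∑ x ∈ (X j).erase g, w i x) ∧
    (∀ i, ∀ g : Fin 6, (∀ j, g ∉ X j) →
        2 * w i g ≤ ∑ x ∈ X i, w i x))

instance : DecidablePred P := fun X => by unfold P; infer_instance

set_option maxRecDepth 1000000 in
set_option maxHeartbeats 4000000 in
theorem k0 : ∀ b ∈ S2, ∀ c ∈ S2, P ![(∅ : Finset (Fin 6)), b, c] := by decide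

set_option maxRecDepth 1000000 in
set_option maxHeartbeats 4000000 in
theorem k1 : ∀ b ∈ S2, ∀ c ∈ S2, P ![({0} : Finset (Fin 6)), b, c] := by decide

set_option maxRecDepth 1000000 in
set_option maxHeartbeats 4000000 in
theorem k2 : ∀ b ∈ S2, ∀ c ∈ S2, P ![({1} : Finset (Fin 6)), b, c] := by decide

set_option maxRecDepth 1000000 in
set_option maxHeartbeats 4000000 in
theorem k3 : ∀ b ∈ S2, ∀ c ∈ S2, P ![({0,1} : Finset (Fin 6)), b, c] := by decide

set_option maxRecDepth 1000000 in
set_option maxHeartbeats 4000000 in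
theorem k4 : ∀ b ∈ S2, ∀ c ∈ S2, P ![({2} : Finset (Fin 6)), b, c] := by decide

set_option maxRecDepth 1000000 in
set_option maxHeartbeats 4000000 in
theorem k5 : ∀ b ∈ S2, ∀ c ∈ S2, P ![({0,2} : Finset (Fin 6)), b, c] := by decide

set_option maxRecDepth 1000000 in
set_option maxHeartbeats 4000000 in
theorem k6 : ∀ b ∈ S2, ∀ c ∈ S2, P ![({1,2} : Finset (Fin 6)), b, c] := by decide

set_option maxRecDepth 1000000 in
set_option maxHeartbeats 4000000 in
theorem k7 : ∀ b ∈ S2, ∀ c ∈ S2, P ![({3} : Finset (Fin 6)), b, c] := by decide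

set_option maxRecDepth 1000000 in
set_option maxHeartbeats 4000000 in
theorem k8 : ∀ b ∈ S2, ∀ c ∈ S2, P ![({0,3} : Finset (Fin 6)), b, c] := by decide

set_option maxRecDepth 1000000 in
set_option maxHeartbeats 4000000 in
theorem k9 : ∀ b ∈ S2, ∀ c ∈ S2, P ![({1,3} : Finset (Fin 6)), b, c] := by decide

set_option maxRecDepth 1000000 in
set_option maxHeartbeats 4000000 in
theorem k10 : ∀ b ∈ S2, ∀ c ∈ S2, P ![({2,3} : Finset (Fin 6)), b, c] := by decide

set_option maxRecDepth 1000000 in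
set_option maxHeartbeats 4000000 in
theorem k11 : ∀ b ∈ S2, ∀ c ∈ S2, P ![({4} : Finset (Fin 6)), b, c] := by decide

set_option maxRecDepth 1000000 in
set_option maxHeartbeats 4000000 in
theorem k12 : ∀ b ∈ S2, ∀ c ∈ S2, P ![({0,4} : Finset (Fin 6)), b, c] := by decide

set_option maxRecDepth 1000000 in
set_option maxHeartbeats 4000000 in
theorem k13 : ∀ b ∈ S2, ∀ c ∈ S2, P ![({1,4} : Finset (Fin 6)), b, c] := by decide

set_option maxRecDepth 1000000 in
set_option maxHeartbeats 4000000 in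
theorem k14 : ∀ b ∈ S2, ∀ c ∈ S2, P ![({2,4} : Finset (Fin 6)), b, c] := by decide

set_option maxRecDepth 1000000 in
set_option maxHeartbeats 4000000 in
theorem k15 : ∀ b ∈ S2, ∀ c ∈ S2, P ![({3,4} : Finset (Fin 6)), b, c] := by decide

set_option maxRecDepth 1000000 in
set_option maxHeartbeats 4000000 in
theorem k16 : ∀ b ∈ S2, ∀ c ∈ S2, P ![({5} : Finset (Fin 6)), b, c] := by decide

set_option maxRecDepth 1000000 in
set_option maxHeartbeats 4000000 in
theorem k17 : ∀ b ∈ S2, ∀ c ∈ S2, P ![({0,5} : Finset (Fin 6)), b, c] := by decide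

set_option maxRecDepth 1000000 in
set_option maxHeartbeats 4000000 in
theorem k18 : ∀ b ∈ S2, ∀ c ∈ S2, P ![({1,5} : Finset (Fin 6)), b, c] := by decide

set_option maxRecDepth 1000000 in
set_option maxHeartbeats 4000000 in
theorem k19 : ∀ b ∈ S2, ∀ c ∈ S2, P ![({2,5} : Finset (Fin 6)), b, c] := by decide

set_option maxRecDepth 1000000 in
set_option maxHeartbeats 4000000 in
theorem k20 : ∀ b ∈ S2, ∀ c ∈ S2, P ![({3,5} : Finset (Fin 6)), b, c] := by decide

set_option maxRecDepth 1000000 in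
set_option maxHeartbeats 4000000 in
theorem k21 : ∀ b ∈ S2, ∀ c ∈ S2, P ![({4,5} : Finset (Fin 6)), b, c] := by decide

set_option maxRecDepth 10000 in
theorem key2 : ∀ a ∈ S2, ∀ b ∈ S2, ∀ c ∈ S2, P ![a, b, c] := by
  intro a ha
  fin_cases ha
  exacts [k0, k1, k2, k3, k4, k5, k6, k7, k8, k9, k10, k11, k12, k13, k14, k15, k16, k17, k18, k19, k20, k21]

theorem key (X : Fin 3 → Finset (Fin 6))
    (hd : ∀ i j, i ≠ j → Disjoint (X i) (X j))
    (hc : ∀ i, (X i).card ≤ 2) :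
    ¬((∀ i j, ∀ g ∈ X j,
          3 * (∑ x ∈ X i, w i x) ≥ 2 * ∑ x ∈ (X j).erase g, w i x) ∧
      (∀ i, ∀ g : Fin 6, (∀ j, g ∉ X j) →
          2 * w i g ≤ ∑ x ∈ X i, w i x)) := by
  have hX : ![X 0, X 1, X 2] = X := by
    funext i; fin_cases i <;> rfl
  have h := key2 (X 0) (by simp [S2, hc 0]) (X 1) (by simp [S2, hc 1]) (X 2)
    (by simp [S2, hc 2])
  rw [hX] at h
  exact h hd

/-- There is a 3-agent, 6-good instance with at most 3 distinct values such that no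
partial allocation with bundles of cardinality at most 2 is both 2/3-EFX and free of
critical goods. -/
theorem exists_instance_no_small_partial_23EFX_without_critical :
    ∃ v : Fin 3 → Fin 6 → ℝ,
      (∃ S : Finset ℝ, S.card ≤ 3 ∧ ∀ i g, v i g ∈ S) ∧
      ∀ X : Fin 3 → Finset (Fin 6),
        (∀ i j, i ≠ j → Disjoint (X i) (X j)) →
        (∀ i, (X i).card ≤ 2) →
        ¬((∀ i j, ∀ g ∈ X j,
              (∑ x ∈ X i, v i x) ≥ (2/3) * ∑ x ∈ (X j).erase g, v i x) ∧
          (∀ i, ∀ g : Fin 6, (∀ j, g ∉ X j) →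
              v i g ≤ (1/2) * ∑ x ∈ X i, v i x)) := by
  refine ⟨fun i g => (w i g : ℝ) / 100, ⟨{1, 3/5, 1/100}, ?_, ?_⟩, ?_⟩
  · exact (Finset.card_insert_le _ _).trans (Nat.succ_le_succ
      ((Finset.card_insert_le _ _).trans (by simp)))
  · intro i g
    fin_cases i <;> fin_cases g <;> norm_num [w, Finset.mem_insert]
  · intro X hd hc ⟨hefx, hcrit⟩
    have hsum : ∀ i (s : Finset (Fin 6)),
        (∑ x ∈ s, ((w i x : ℝ) / 100)) = (∑ x ∈ s, w i x : ℕ) / 100 := by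
      intro i s; rw [← Finset.sum_div]; norm_cast
    refine key X hd hc ⟨?_, ?_⟩
    · intro i j g hg
      have h := hefx i j g hg
      rw [hsum, hsum] at h
      have h2 : (2:ℝ) * (∑ x ∈ (X j).erase g, w i x : ℕ) ≤ 3 * (∑ x ∈ X i, w i x : ℕ) := by
        linarith
      exact_mod_cast h2
    · intro i g hg
      have h : (w i g : ℝ) / 100 ≤ 1 / 2 * ((∑ x ∈ X i, w i x : ℕ) / 100) := by
        have h0 := hcrit i g hg
        rw [hsum] at h0
        exact h0
      have h2 : (2:ℝ) * (w i g : ℕ) ≤ (∑ x ∈ X i, w i x : ℕ) := by linarith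
      exact_mod_cast h2
end

section
/- In any 3-value instance with values 1 > b > c ≥ 0 where b ≤ 1/2, if a partial allocation X satisfies: (P-c) every agent values her bundle at least as much as any single unallocated good, (P-d) every agent with bundle of size > 1 has no critical good, (P-e) every agent with a singleton bundle has at most one critical good and values it at most 2/3 of her bundle, and additionally there exists an agent s with |X_s| = 2 such that every agent i weakly prefers her own bundle to X_s, then no agent has a critical good in X. -/
/-- In a 3-value instance with b ≤ 1/2, under properties (c), (d), (e) and the
existence of an unenvied agent with a bundle of two goods, no agent has a critical good. -/
theorem no_critical_goods_small_b {N M : Type*} [DecidableEq M]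
    (b c : ℝ) (hb : b ≤ 1/2) (hb1 : b < 1) (hcb : c < b) (hc : 0 ≤ c)
    (v : N → M → ℝ) (hv : ∀ i g, v i g = 1 ∨ v i g = b ∨ v i g = c)
    (X : N → Finset M) (hdisj : ∀ i j : N, i ≠ j → Disjoint (X i) (X j))
    -- (P-c): every agent weakly prefers her bundle to any single unallocated good
    (hPc : ∀ i : N, ∀ g : M, (∀ j, g ∉ X j) →
        (∑ x ∈ X i, v i x) ≥ v i g)
    -- (P-d): agents with bundles of size > 1 have no critical good
    (hPd : ∀ i : N, 1 < (X i).card → ∀ g : M, (∀ j, g ∉ X j) →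
        v i g ≤ (1/2) * ∑ x ∈ X i, v i x)
    -- (P-e): agents with singleton bundles have at most one critical good,
    -- valued at most 2/3 of their bundle
    (hPe : ∀ i : N, (X i).card = 1 →
        (∀ g g' : M, (∀ j, g ∉ X j) → (∀ j, g' ∉ X j) →
          v i g > (1/2) * (∑ x ∈ X i, v i x) →
          v i g' > (1/2) * (∑ x ∈ X i, v i x) → g = g') ∧
        (∀ g : M, (∀ j, g ∉ X j) →
          v i g > (1/2) * (∑ x ∈ X i, v i x) →
          v i g ≤ (2/3) * ∑ x ∈ X i, v i x))
    -- a source with a bundle of two goods, weakly unenvied by everyone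
    (s : N) (hs : (X s).card = 2)
    (hsrc : ∀ i : N, (∑ x ∈ X i, v i x) ≥ ∑ x ∈ X s, v i x) :
    ∀ i : N, ∀ g : M, (∀ j, g ∉ X j) →
      v i g ≤ (1/2) * ∑ x ∈ X i, v i x := by
  intro i g hg
  rcases lt_trichotomy (X i).card 1 with h0 | h1 | h2
  · -- empty bundle
    have hcard : (X i).card = 0 := by omega
    have hempty : X i = ∅ := Finset.card_eq_zero.mp hcard
    have hle := hPc i g hg
    rw [hempty] at hle ⊢
    simp only [Finset.sum_empty] at hle ⊢
    linarith
  · -- singleton bundle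
    by_contra hcon
    push_neg at hcon
    obtain ⟨h, hX⟩ := Finset.card_eq_one.mp h1
    have hS : (∑ x ∈ X i, v i x) = v i h := by rw [hX, Finset.sum_singleton]
    have hle := (hPe i h1).2 g hg hcon
    rw [hS] at hcon hle
    rcases hv i h with hh | hh | hh <;> rcases hv i g with hg' | hg' | hg' <;>
      rw [hh, hg'] at hcon hle
    · linarith
    · linarith
    · linarith
    · linarith
    · linarith
    · -- v i h = b, v i g = c : use the source
      have hine : i ≠ s := by intro he; rw [he] at h1; omega
      obtain ⟨p, q, hpq, hXs⟩ := Finset.card_eq_two.mp hs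
      have hsum : (∑ x ∈ X s, v i x) = v i p + v i q := by
        rw [hXs, Finset.sum_insert (by simp [hpq]), Finset.sum_singleton]
      have hp : c ≤ v i p := by rcases hv i p with h' | h' | h' <;> rw [h'] <;> linarith
      have hq : c ≤ v i q := by rcases hv i q with h' | h' | h' <;> rw [h'] <;> linarith
      have := hsrc i
      rw [hS, hsum, hh] at this
      linarith
    · linarith
    · linarith
    · linarith
  · exact hPd i h2 g hg
end

section
/- Consider a 3-value instance with values 1 > b > c = 0 and m goods. Define c' = (1/(3m))·min{ |k + ℓ·b| : k, ℓ ∈ {−3m, …, 2m}, k + ℓ·b ≠ 0 }, and define perturbed valuations ṽ_i by replacing every zero value with c'. Then every allocation that is 2/3-EFX under (ṽ_i) is also 2/3-EFX under the original valuations (v_i). -/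
/-- Replacing zero values by the small perturbation c' preserves 2/3-EFX back to the
original valuations. -/
theorem perturbation_preserves_23EFX {N M : Type*} [Fintype M] [DecidableEq M]
    (m : ℕ) (hm : Fintype.card M = m) (hm0 : 0 < m)
    (b : ℝ) (hb0 : 0 < b) (hb1 : b < 1)
    (v : N → M → ℝ) (hv : ∀ i g, v i g = 1 ∨ v i g = b ∨ v i g = 0)
    (c' : ℝ)
    (hc' : c' = (1 / (3 * (m : ℝ))) *
        sInf {x : ℝ | ∃ k l : ℤ, -(3 * (m : ℤ)) ≤ k ∧ k ≤ 2 * (m : ℤ) ∧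
          -(3 * (m : ℤ)) ≤ l ∧ l ≤ 2 * (m : ℤ) ∧
          (k : ℝ) + (l : ℝ) * b ≠ 0 ∧ x = |(k : ℝ) + (l : ℝ) * b|})
    (vt : N → M → ℝ)
    (hvt : ∀ i g, vt i g = if v i g = 0 then c' else v i g)
    (X : N → Finset M)
    (hdisj : ∀ i j : N, i ≠ j → Disjoint (X i) (X j))
    (hcomplete : ∀ g : M, ∃ i : N, g ∈ X i)
    (hEFX : ∀ i j : N, ∀ g ∈ X j,
        (∑ x ∈ X i, vt i x) ≥ (2/3) * ∑ x ∈ (X j).erase g, vt i x) :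
    ∀ i j : N, ∀ g ∈ X j,
        (∑ x ∈ X i, v i x) ≥ (2/3) * ∑ x ∈ (X j).erase g, v i x := by
  classical
  -- nonnegativity of v
  have hvnn : ∀ i x, 0 ≤ v i x := by
    intro i x
    rcases hv i x with h | h | h <;> rw [h] <;> linarith
  -- c' ≥ 0
  set Sset : Set ℝ := {x : ℝ | ∃ k l : ℤ, -(3 * (m : ℤ)) ≤ k ∧ k ≤ 2 * (m : ℤ) ∧
          -(3 * (m : ℤ)) ≤ l ∧ l ≤ 2 * (m : ℤ) ∧
          (k : ℝ) + (l : ℝ) * b ≠ 0 ∧ x = |(k : ℝ) + (l : ℝ) * b|} with hSset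
  have hSnn : ∀ x ∈ Sset, (0:ℝ) ≤ x := by
    rintro x ⟨k, l, _, _, _, _, _, hx⟩
    rw [hx]; exact abs_nonneg _
  have hc'nn : 0 ≤ c' := by
    rw [hc']
    apply mul_nonneg
    · positivity
    · exact Real.sInf_nonneg hSnn
  -- sum decomposition
  have key : ∀ (i : N) (S : Finset M), ∃ p q z : ℕ, p + q + z = S.card ∧
      (∑ x ∈ S, v i x) = p + q * b ∧ (∑ x ∈ S, vt i x) = p + q * b + z * c' := by
    intro i S
    induction S using Finset.induction_on with
    | empty => exact ⟨0, 0, 0, by simp, by simp, by simp⟩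
    | insert a s ha ih =>
      obtain ⟨p, q, z, h1, h2, h3⟩ := ih
      rw [Finset.sum_insert ha, Finset.sum_insert ha, Finset.card_insert_of_notMem ha]
      rcases hv i a with h | h | h
      · refine ⟨p + 1, q, z, by omega, ?_, ?_⟩
        · rw [h, h2]; push_cast; ring
        · rw [hvt, h, if_neg one_ne_zero, h3]; push_cast; ring
      · refine ⟨p, q + 1, z, by omega, ?_, ?_⟩
        · rw [h, h2]; push_cast; ring
        · rw [hvt, h, if_neg (ne_of_gt hb0), h3]; push_cast; ring
      · refine ⟨p, q, z + 1, by omega, ?_, ?_⟩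
        · rw [h, h2]; push_cast; ring
        · rw [hvt, h, if_pos rfl, h3]; push_cast; ring
  intro i j g hg
  by_cases hij : i = j
  · -- same agent: trivial since values are nonnegative
    subst hij
    have h1 : ∑ x ∈ (X i).erase g, v i x ≤ ∑ x ∈ X i, v i x :=
      Finset.sum_le_sum_of_subset_of_nonneg (Finset.erase_subset _ _)
        (fun x _ _ => hvnn i x)
    have h2 : 0 ≤ ∑ x ∈ (X i).erase g, v i x :=
      Finset.sum_nonneg (fun x _ => hvnn i x)
    linarith
  · obtain ⟨p, q, z, hS1, hS2, hS3⟩ := key i (X i)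
    obtain ⟨p', q', z', hT1, hT2, hT3⟩ := key i ((X j).erase g)
    have hEFX' := hEFX i j g hg
    rw [hS3, hT3] at hEFX'
    rw [hS2, hT2]
    by_contra hcon
    push_neg at hcon
    -- cardinality bounds
    have hcard : (X i).card + (X j).card ≤ m := by
      have := Finset.card_le_univ (X i ∪ X j)
      rw [Finset.card_union_of_disjoint (hdisj i j hij)] at this
      omega
    have hXj : 1 ≤ (X j).card := Finset.card_pos.mpr ⟨g, hg⟩
    have hT : ((X j).erase g).card ≤ m := by
      have := Finset.card_erase_le (a := g) (s := X j)
      omega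
    have hpz : p + q + z ≤ m - 1 := by omega
    have hpz' : p' + q' + z' ≤ m := by omega
    -- the integer combination
    set x : ℝ := (2 * p' - 3 * p : ℝ) + (2 * q' - 3 * q : ℝ) * b with hxdef
    have hxpos : 0 < x := by
      rw [hxdef]; push_cast; nlinarith
    have hxmem : x ∈ Sset := by
      refine ⟨2 * (p' : ℤ) - 3 * (p : ℤ), 2 * (q' : ℤ) - 3 * (q : ℤ), ?_, ?_, ?_, ?_, ?_, ?_⟩
      · have : (p : ℤ) ≤ m := by exact_mod_cast (by omega : p ≤ m)
        omega
      · have : (p' : ℤ) ≤ m := by exact_mod_cast (by omega : p' ≤ m)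
        omega
      · have : (q : ℤ) ≤ m := by exact_mod_cast (by omega : q ≤ m)
        omega
      · have : (q' : ℤ) ≤ m := by exact_mod_cast (by omega : q' ≤ m)
        omega
      · push_cast
        rw [hxdef] at hxpos
        intro h; rw [h] at hxpos; exact lt_irrefl 0 hxpos
      · push_cast
        rw [hxdef, abs_of_pos hxpos, hxdef]
    have hbdd : BddBelow Sset := ⟨0, hSnn⟩
    have hinfle : sInf Sset ≤ x := csInf_le hbdd hxmem
    have h3m : 3 * (m : ℝ) * c' ≤ x := by
      rw [hc']
      have hm' : (0:ℝ) < 3 * m := by positivity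
      calc 3 * (m : ℝ) * (1 / (3 * (m : ℝ)) * sInf Sset) = sInf Sset := by
            field_simp
        _ ≤ x := hinfle
    -- from the perturbed EFX inequality
    have hz : (z : ℝ) ≤ (m : ℝ) - 1 := by
      have : z ≤ m - 1 := by omega
      have : (z : ℝ) ≤ ((m - 1 : ℕ) : ℝ) := by exact_mod_cast this
      calc (z : ℝ) ≤ ((m - 1 : ℕ) : ℝ) := this
        _ ≤ (m : ℝ) - 1 := by
            have : ((m - 1 : ℕ) : ℝ) = (m : ℝ) - 1 := by
              have : 1 ≤ m := hm0
              push_cast [Nat.cast_sub this]; ring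
            linarith [this.le]
    have hxle : x ≤ 3 * (z : ℝ) * c' := by
      rw [hxdef]
      have hz'nn : (0:ℝ) ≤ (z' : ℝ) * c' := mul_nonneg (by positivity) hc'nn
      push_cast
      nlinarith [hEFX']
    -- contradiction
    have hprod : 0 ≤ ((m : ℝ) - 1 - z) * c' :=
      mul_nonneg (by linarith) hc'nn
    have hexp : ((m : ℝ) - 1 - z) * c' = (m : ℝ) * c' - c' - (z : ℝ) * c' := by ring
    rw [hexp] at hprod
    have hc0 : c' ≤ 0 := by linarith
    have hc'eq : c' = 0 := le_antisymm hc0 hc'nn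
    rw [hc'eq] at hxle
    linarith
end

section
/- Suppose an agent's bundle history is a finite sequence of sets each of cardinality 1 or 2, where: transitions between same-cardinality bundles strictly increase value; transitions from cardinality 2 to cardinality 1 increase value by a factor strictly greater than 3/2; and transitions from cardinality 1 to cardinality 2 keep at least 2/3 of the value. Then no bundle (as a set with its value and cardinality) is ever repeated: at each step, the current bundle's value strictly exceeds the value of every earlier bundle of the same cardinality. -/
/-- No-repeated-bundles claim: along the history, the current bundle's value strictly
exceeds the value of every earlier bundle of the same cardinality. -/
theorem no_repeated_bundles (T : ℕ) (v : ℕ → ℝ) (k : ℕ → ℕ)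
    (hpos : ∀ t ≤ T, 0 < v t)
    (hcard : ∀ t ≤ T, k t = 1 ∨ k t = 2)
    (hsame : ∀ t, t < T → k (t + 1) = k t → v (t + 1) > v t)
    (hdown : ∀ t, t < T → k t = 2 → k (t + 1) = 1 → v (t + 1) > (3/2) * v t)
    (hup : ∀ t, t < T → k t = 1 → k (t + 1) = 2 → v (t + 1) ≥ (2/3) * v t) :
    ∀ t ≤ T, ∀ s < t, k s = k t → v t > v s := by
  set f : ℕ → ℝ := fun t => (if k t = 1 then (2:ℝ) else 3) * v t with hf
  have hstep : ∀ t, t < T →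
      f (t+1) ≥ f t ∧ (¬(k t = 1 ∧ k (t+1) = 2) → f (t+1) > f t) := by
    intro t ht
    have hp : 0 < v t := hpos t (le_of_lt ht)
    have hct := hcard t (le_of_lt ht)
    have hct1 := hcard (t+1) (by omega)
    rcases hct with h1 | h2 <;> rcases hct1 with h1' | h2'
    · have hs := hsame t ht (by omega)
      constructor
      · simp only [hf, h1, h1', if_pos]; linarith
      · intro _; simp only [hf, h1, h1', if_pos]; linarith
    · have hu := hup t ht h1 h2'
      constructor
      · simp only [hf, h1, h2']; norm_num; linarith
      · intro hc; exact absurd ⟨h1, h2'⟩ hc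
    · have hd := hdown t ht h2 h1'
      have : (2:ℝ) * v (t+1) > 3 * v t := by linarith
      constructor
      · simp only [hf, h1', h2]; norm_num; linarith
      · intro _; simp only [hf, h1', h2]; norm_num; linarith
    · have hs := hsame t ht (by omega)
      constructor
      · simp only [hf, h2, h2']; norm_num; linarith
      · intro _; simp only [hf, h2, h2']; norm_num; linarith
  have hmono : ∀ s t, s ≤ t → t ≤ T → f s ≤ f t := by
    intro s t hst htT
    induction t with
    | zero => interval_cases s; rfl
    | succ n ih =>
      rcases Nat.lt_or_ge s (n+1) with h | h
      · have h1 : f s ≤ f n := ih (by omega) (by omega)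
        have h2 := (hstep n (by omega)).1
        linarith
      · have : s = n + 1 := by omega
        simp [this]
  intro t htT s hst hks
  have key : f t > f s := by
    rcases Nat.lt_or_ge (s+1) t with h2 | h1
    · -- t ≥ s + 2 : at least one of the first two steps is strict
      have hsT : s < T := by omega
      have hs1T : s + 1 < T := by omega
      have hmt : f (s+2) ≤ f t := hmono (s+2) t (by omega) htT
      by_cases hupc : k s = 1 ∧ k (s+1) = 2
      · have hstrict : f (s+2) > f (s+1) := (hstep (s+1) hs1T).2 (by
          intro ⟨ha, _⟩; rw [hupc.2] at ha; omega)
        have := (hstep s hsT).1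
        linarith
      · have hstrict : f (s+1) > f s := (hstep s hsT).2 hupc
        have := (hstep (s+1) hs1T).1
        linarith
    · -- t = s + 1 : same-cardinality step, strict
      have ht1 : t = s + 1 := by omega
      have hs' : v (s+1) > v s := hsame s (by omega) (by rw [← ht1, ← hks])
      have hk1 : k (s+1) = k s := by rw [← ht1]; exact hks.symm
      rcases hcard s (by omega) with h | h <;>
        simp only [hf, ht1, hk1, h] <;> norm_num <;> linarith
  rcases hcard t htT with h | h <;>
    · rw [hf] at key
      simp only [hks, h] at key
      norm_num at key
      linarith
end

section
/- Let 1 > b > c > 0 with b > 1/2 and b + c < 2/3, and let k_max be the unique integer with b + (k_max−1)c ≥ 2/3 and b + (k_max−2)c < 2/3. For an additive valuation with values in {1, b, c} and a set X with |X| ≤ k_max containing at most one good of value 1, at most two further goods of value ≥ b, and all remaining goods of value c, and for any g ∈ X: v(X \ {g}) < b + 5/3. -/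
/-- Lemma "Three_b": a bundle with at most one good of value 1, at most two further goods
of value b, and all remaining goods of value c, has value less than b + 5/3 after removing
any single good. -/
theorem three_b_bound {M : Type*} [DecidableEq M]
    (v : M → ℝ) (b c : ℝ) (kmax : ℕ)
    (hb1 : 1/2 < b) (hb2 : b < 1) (hc : 0 < c) (hcb : c < b) (hbc : b + c < 2/3)
    (hv : ∀ g : M, v g = 1 ∨ v g = b ∨ v g = c)
    (hk1 : b + ((kmax : ℝ) - 1) * c ≥ 2/3)
    (hk2 : b + ((kmax : ℝ) - 2) * c < 2/3)
    (X : Finset M) (hX : X.card ≤ kmax)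
    -- at most one good of value 1
    (hone : ∀ g1 ∈ X, ∀ g2 ∈ X, v g1 = 1 → v g2 = 1 → g1 = g2)
    -- at most two further goods of value b
    (htwo : ∀ g1 ∈ X, ∀ g2 ∈ X, ∀ g3 ∈ X,
        v g1 = b → v g2 = b → v g3 = b → g1 ≠ g2 → g1 ≠ g3 → g2 ≠ g3 → False) :
    ∀ g ∈ X, (∑ x ∈ X.erase g, v x) < b + 5/3 := by
  intro g hg
  set Y := X.erase g with hY
  have hYX : Y ⊆ X := Finset.erase_subset g X
  set A := Y.filter (fun x => v x = 1) with hA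
  set Y' := Y.filter (fun x => ¬ v x = 1) with hY'
  set B := Y'.filter (fun x => v x = b) with hB
  set C := Y'.filter (fun x => ¬ v x = b) with hC
  -- split the sum
  have hsplit1 : (∑ x ∈ Y, v x) = (∑ x ∈ A, v x) + (∑ x ∈ Y', v x) :=
    (Finset.sum_filter_add_sum_filter_not Y _ v).symm
  have hsplit2 : (∑ x ∈ Y', v x) = (∑ x ∈ B, v x) + (∑ x ∈ C, v x) :=
    (Finset.sum_filter_add_sum_filter_not Y' _ v).symm
  have hsA : (∑ x ∈ A, v x) = (A.card : ℝ) * 1 := by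
    rw [Finset.sum_congr rfl (fun x hx => (Finset.mem_filter.mp hx).2)]
    simp
    rfl
  have hsB : (∑ x ∈ B, v x) = (B.card : ℝ) * b := by
    rw [Finset.sum_congr rfl (fun x hx => (Finset.mem_filter.mp hx).2)]
    simp [mul_comm]
    exact Or.inl rfl
  have hsC : (∑ x ∈ C, v x) = (C.card : ℝ) * c := by
    have : ∀ x ∈ C, v x = c := by
      intro x hx
      have h1 := (Finset.mem_filter.mp hx).2
      have h2 := (Finset.mem_filter.mp (Finset.mem_filter.mp hx).1).2
      rcases hv x with h | h | h
      · exact absurd h h2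
      · exact absurd h h1
      · exact h
    rw [Finset.sum_congr rfl this]
    simp [mul_comm]
  -- cardinalities
  have hcardsplit1 : A.card + Y'.card = Y.card := Finset.card_filter_add_card_filter_not _
  have hcardsplit2 : B.card + C.card = Y'.card := Finset.card_filter_add_card_filter_not _
  have hAcard : A.card ≤ 1 := by
    apply Finset.card_le_one.mpr
    intro x hx y hy
    exact hone x (hYX (Finset.mem_filter.mp hx).1) y (hYX (Finset.mem_filter.mp hy).1)
      (Finset.mem_filter.mp hx).2 (Finset.mem_filter.mp hy).2
  have hBcard : B.card ≤ 2 := by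
    by_contra h
    push_neg at h
    obtain ⟨x, hx, y, hy, z, hz, hxy, hxz, hyz⟩ := Finset.two_lt_card.mp h
    have hmem : ∀ w ∈ B, w ∈ X ∧ v w = b := by
      intro w hw
      exact ⟨hYX (Finset.mem_filter.mp (Finset.mem_filter.mp hw).1).1,
        (Finset.mem_filter.mp hw).2⟩
    exact htwo x (hmem x hx).1 y (hmem y hy).1 z (hmem z hz).1
      (hmem x hx).2 (hmem y hy).2 (hmem z hz).2 hxy hxz hyz
  have hYcard : Y.card + 1 ≤ kmax := by
    have : Y.card = X.card - 1 := Finset.card_erase_of_mem hg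
    have hpos : 1 ≤ X.card := Finset.card_pos.mpr ⟨g, hg⟩
    omega
  -- cast to reals
  have hkR : (A.card : ℝ) + (B.card : ℝ) + (C.card : ℝ) + 1 ≤ (kmax : ℝ) := by
    have : A.card + B.card + C.card + 1 ≤ kmax := by omega
    exact_mod_cast this
  have hAR : (A.card : ℝ) ≤ 1 := by exact_mod_cast hAcard
  have hBR : (B.card : ℝ) ≤ 2 := by exact_mod_cast hBcard
  have hCR : (0:ℝ) ≤ (C.card : ℝ) := Nat.cast_nonneg _
  rw [hsplit1, hsplit2, hsA, hsB, hsC]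
  have h1c : c ≤ 1 := le_of_lt (lt_trans hcb hb2)
  nlinarith [mul_nonneg (sub_nonneg.mpr hAR) (sub_nonneg.mpr h1c),
    mul_nonneg (sub_nonneg.mpr hBR) (sub_nonneg.mpr hcb.le),
    mul_nonneg hCR hc.le]
end
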